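/- The nonlinear forward equations have a unique solution: suppose φ, ψ : [0,∞) → [0,1]^Λ are such that ∑_{x∈Λ} φ_t(x) ≤ 1 and ∑_{x∈Λ} ψ_t(x) ≤ 1 for all t, for each x the maps t ↦ φ_t(x) and t ↦ ψ_t(x) are differentiable and satisfy (d/dt)φ_t(x) = ∑_{y∈Λ} φ_t(y)·(q(y,x) + q(y,0)·φ_t(x)) and likewise for ψ, the interchange of differentiation and summation over Λ is valid (e.g. for each T > 0, ∑_{x∈Λ} sup_{t≤T} |(d/dt)(φ_t(x) − ψ_t(x))| < ∞), and φ_0 = ψ_0. Then φ_t(x) = ψ_t(x) for all t ≥ 0 and x ∈ Λ. -/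

import Mathlib

open scoped BigOperators Topology


/-- Auxiliary: triangle inequality for real tsums. -/
lemma fv_abs_tsum_le_tsum_abs {ι : Type*} (f : ι → ℝ) (h : Summable fun i => |f i|) :
    |∑' i, f i| ≤ ∑' i, |f i| := by
  have h' : Summable fun i => ‖f i‖ := by simpa [Real.norm_eq_abs] using h
  simpa [Real.norm_eq_abs] using norm_tsum_le_tsum_norm h'

set_option maxHeartbeats 2000000 in
/-- the nonlinear forward equations have a unique solution. -/
theorem fv_forward_equations_unique
    {Λ : Type*} [Countable Λ] [Nonempty Λ] [DecidableEq Λ]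
    -- the rate matrix Q on Λ ∪ {0} (`none` is the absorbing state 0)
    (q : Option Λ → Option Λ → ℝ)
    (hq_nonneg : ∀ x y, x ≠ y → 0 ≤ q x y)
    (hq_absorb : ∀ y, q none y = 0)
    (hq_summable : ∀ x, Summable (fun y : {y : Option Λ // y ≠ x} => q x (y : Option Λ)))
    (hq_diag : ∀ x, q x x = -∑' y : {y : Option Λ // y ≠ x}, q x (y : Option Λ))
    (qbar : ℝ)
    (hqbar : ∀ x, (∑' y : {y : Option Λ // y ≠ x}, q x (y : Option Λ)) ≤ qbar)
    (C : ℝ) (hC : C = ⨆ x : Λ, q (some x) none)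
    -- two solutions φ and ψ of the nonlinear forward equations
    (φ ψ : ℝ → Λ → ℝ)
    (hφ_mem : ∀ t, 0 ≤ t → ∀ x, φ t x ∈ Set.Icc (0:ℝ) 1)
    (hψ_mem : ∀ t, 0 ≤ t → ∀ x, ψ t x ∈ Set.Icc (0:ℝ) 1)
    (hφ_summable : ∀ t, 0 ≤ t → Summable (φ t))
    (hψ_summable : ∀ t, 0 ≤ t → Summable (ψ t))
    (hφ_mass : ∀ t, 0 ≤ t → ∑' x : Λ, φ t x ≤ 1)
    (hψ_mass : ∀ t, 0 ≤ t → ∑' x : Λ, ψ t x ≤ 1)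
    (hφ_deriv : ∀ t, 0 ≤ t → ∀ x : Λ,
      HasDerivAt (fun s => φ s x)
        (∑' y : Λ, φ t y * (q (some y) (some x) + q (some y) none * φ t x)) t)
    (hψ_deriv : ∀ t, 0 ≤ t → ∀ x : Λ,
      HasDerivAt (fun s => ψ s x)
        (∑' y : Λ, ψ t y * (q (some y) (some x) + q (some y) none * ψ t x)) t)
    -- interchange of differentiation and summation is valid
    (hinterchange : ∀ T, 0 < T →
      Summable (fun x : Λ => ⨆ t : Set.Icc (0:ℝ) T,
        |(∑' y : Λ, φ (t:ℝ) y * (q (some y) (some x) + q (some y) none * φ (t:ℝ) x))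
          - (∑' y : Λ, ψ (t:ℝ) y * (q (some y) (some x) + q (some y) none * ψ (t:ℝ) x))|))
    (hinit : ∀ x : Λ, φ 0 x = ψ 0 x) :
    ∀ t, 0 ≤ t → ∀ x : Λ, φ t x = ψ t x := by
  classical
  -- basic facts about the rate matrix
  have hqbar0 : 0 ≤ qbar := by
    have h := hqbar none
    have hz : (∑' y : {y : Option Λ // y ≠ (none : Option Λ)}, q none (y : Option Λ)) = 0 := by
      have : ∀ y : {y : Option Λ // y ≠ (none : Option Λ)}, q none (y : Option Λ) = 0 :=
        fun y => hq_absorb _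
      simp [this]
    linarith
  have hq_le : ∀ x y : Option Λ, y ≠ x → q x y ≤ qbar := by
    intro x y hyx
    refine le_trans ?_ (hqbar x)
    exact Summable.le_tsum (hq_summable x) (⟨y, hyx⟩ : {y : Option Λ // y ≠ x})
      (fun j _ => hq_nonneg x j (Ne.symm j.2))
  have hq_diag_abs : ∀ x : Option Λ, |q x x| ≤ qbar := by
    intro x
    have hnn : 0 ≤ ∑' y : {y : Option Λ // y ≠ x}, q x (y : Option Λ) :=
      tsum_nonneg fun j => hq_nonneg x j (Ne.symm j.2)
    rw [hq_diag x, abs_neg, abs_of_nonneg hnn]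
    exact hqbar x
  have hq_abs : ∀ y x : Λ, |q (some y) (some x)| ≤ qbar := by
    intro y x
    rcases eq_or_ne x y with h | h
    · subst h; exact hq_diag_abs _
    · have hne : (some y : Option Λ) ≠ some x := by simpa using Ne.symm h
      rw [abs_of_nonneg (hq_nonneg _ _ hne)]
      exact hq_le _ _ (Ne.symm hne)
  have hq0_nonneg : ∀ y : Λ, 0 ≤ q (some y) none :=
    fun y => hq_nonneg _ _ (Option.some_ne_none y)
  have hq0_le : ∀ y : Λ, q (some y) none ≤ qbar :=
    fun y => hq_le _ _ (Ne.symm (Option.some_ne_none y))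
  -- generic facts about the forward-equation vector field
  have hgen : ∀ f : ℝ → Λ → ℝ, (∀ t, 0 ≤ t → ∀ x, f t x ∈ Set.Icc (0:ℝ) 1) →
      (∀ t, 0 ≤ t → Summable (f t)) → (∀ t, 0 ≤ t → ∑' x : Λ, f t x ≤ 1) →
      ∀ t, 0 ≤ t → ∀ x : Λ,
        Summable (fun y : Λ => f t y * (q (some y) (some x) + q (some y) none * f t x)) ∧
        |∑' y : Λ, f t y * (q (some y) (some x) + q (some y) none * f t x)| ≤ 2 * qbar := by
    intro f hmem hsum hmass t ht x
    have hcoef : ∀ y : Λ, |q (some y) (some x) + q (some y) none * f t x| ≤ 2 * qbar := by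
      intro y
      have h1 := hq_abs y x
      have h2 : 0 ≤ q (some y) none * f t x := mul_nonneg (hq0_nonneg y) (hmem t ht x).1
      have h3 : q (some y) none * f t x ≤ qbar := by
        calc q (some y) none * f t x ≤ qbar * 1 :=
              mul_le_mul (hq0_le y) (hmem t ht x).2 (hmem t ht x).1 hqbar0
          _ = qbar := mul_one _
      calc |q (some y) (some x) + q (some y) none * f t x|
          ≤ |q (some y) (some x)| + |q (some y) none * f t x| := abs_add_le _ _
        _ ≤ qbar + qbar := add_le_add h1 (by rwa [abs_of_nonneg h2])
        _ = 2 * qbar := by ring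
    have habs : ∀ y : Λ, |f t y * (q (some y) (some x) + q (some y) none * f t x)|
        ≤ f t y * (2 * qbar) := by
      intro y
      rw [abs_mul, abs_of_nonneg (hmem t ht y).1]
      exact mul_le_mul_of_nonneg_left (hcoef y) (hmem t ht y).1
    have hsumabs : Summable (fun y =>
        |f t y * (q (some y) (some x) + q (some y) none * f t x)|) :=
      Summable.of_nonneg_of_le (fun y => abs_nonneg _) habs ((hsum t ht).mul_right (2*qbar))
    refine ⟨hsumabs.of_abs, ?_⟩
    calc |∑' y : Λ, f t y * (q (some y) (some x) + q (some y) none * f t x)|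
        ≤ ∑' y : Λ, |f t y * (q (some y) (some x) + q (some y) none * f t x)| :=
          fv_abs_tsum_le_tsum_abs _ hsumabs
      _ ≤ ∑' y : Λ, f t y * (2 * qbar) :=
          Summable.tsum_le_tsum habs hsumabs ((hsum t ht).mul_right _)
      _ = (∑' y : Λ, f t y) * (2 * qbar) := tsum_mul_right
      _ ≤ 1 * (2 * qbar) := mul_le_mul_of_nonneg_right (hmass t ht) (by linarith)
      _ = 2 * qbar := one_mul _
  -- it suffices to prove the claim on every compact horizon
  suffices H : ∀ T, 0 < T → ∀ t ∈ Set.Icc (0:ℝ) T, ∀ x : Λ, φ t x = ψ t x by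
    intro t ht x
    rcases eq_or_lt_of_le ht with h | h
    · rw [← h]; exact hinit x
    · exact H t h t ⟨ht, le_refl t⟩ x
  intro T hT
  set K : ℝ := 4 * qbar with hK
  have hK0 : 0 ≤ K := by rw [hK]; linarith
  set g : Λ → ℝ → ℝ := fun x t => φ t x - ψ t x with hgdef
  set D : Λ → ℝ → ℝ := fun x t =>
    (∑' y : Λ, φ t y * (q (some y) (some x) + q (some y) none * φ t x)) -
    (∑' y : Λ, ψ t y * (q (some y) (some x) + q (some y) none * ψ t x)) with hDdef
  have hD_bound : ∀ x t, 0 ≤ t → |D x t| ≤ K := by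
    intro x t ht
    have h1 := (hgen φ hφ_mem hφ_summable hφ_mass t ht x).2
    have h2 := (hgen ψ hψ_mem hψ_summable hψ_mass t ht x).2
    have h3 : |D x t| ≤
        |∑' y : Λ, φ t y * (q (some y) (some x) + q (some y) none * φ t x)| +
        |∑' y : Λ, ψ t y * (q (some y) (some x) + q (some y) none * ψ t x)| := by
      simp only [hDdef]
      simpa [Real.norm_eq_abs] using norm_sub_le
        (∑' y : Λ, φ t y * (q (some y) (some x) + q (some y) none * φ t x))
        (∑' y : Λ, ψ t y * (q (some y) (some x) + q (some y) none * ψ t x))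
    rw [hK]; linarith
  set M : Λ → ℝ := fun x => ⨆ t : Set.Icc (0:ℝ) T, |D x t| with hM
  have hMsummable : Summable M := hinterchange T hT
  have hMnonneg : ∀ x, 0 ≤ M x := fun x => Real.iSup_nonneg (fun t => abs_nonneg _)
  have hMbdd : ∀ x, BddAbove (Set.range fun t : Set.Icc (0:ℝ) T => |D x (t:ℝ)|) := by
    intro x
    refine ⟨K, ?_⟩
    rintro v ⟨t, rfl⟩
    exact hD_bound x t t.2.1
  have hM_le : ∀ x, ∀ t, t ∈ Set.Icc (0:ℝ) T → |D x t| ≤ M x := by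
    intro x t ht
    exact le_ciSup (hMbdd x) (⟨t, ht⟩ : Set.Icc (0:ℝ) T)
  set S : ℝ := ∑' x, M x with hS
  have hS0 : 0 ≤ S := tsum_nonneg hMnonneg
  have hg_deriv : ∀ t, 0 ≤ t → ∀ x, HasDerivAt (g x) (D x t) t :=
    fun t ht x => (hφ_deriv t ht x).sub (hψ_deriv t ht x)
  have hg0 : ∀ x, g x 0 = 0 := fun x => sub_eq_zero.2 (hinit x)
  have hg_lip : ∀ x, ∀ t, t ∈ Set.Icc (0:ℝ) T → ∀ t', t' ∈ Set.Icc (0:ℝ) T →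
      |g x t - g x t'| ≤ M x * |t - t'| := by
    intro x t ht t' ht'
    have := (convex_Icc (0:ℝ) T).norm_image_sub_le_of_norm_hasDerivWithin_le
      (f := g x) (f' := D x)
      (fun s hs => (hg_deriv s hs.1 x).hasDerivWithinAt)
      (fun s hs => by rw [Real.norm_eq_abs]; exact hM_le x s hs) ht' ht
    simpa [Real.norm_eq_abs] using this
  have hg_le : ∀ x, ∀ t, t ∈ Set.Icc (0:ℝ) T → |g x t| ≤ M x * t := by
    intro x t ht
    have := hg_lip x t ht 0 ⟨le_refl 0, hT.le⟩
    simpa [hg0 x, abs_of_nonneg ht.1] using this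
  have hg_summable : ∀ t, t ∈ Set.Icc (0:ℝ) T → Summable (fun x => |g x t|) := by
    intro t ht
    exact Summable.of_nonneg_of_le (fun x => abs_nonneg _) (fun x => hg_le x t ht)
      (hMsummable.mul_right t)
  set u : ℝ → ℝ := fun t => ∑' x, |g x t| with hu
  have hu0 : ∀ t, 0 ≤ u t := fun t => tsum_nonneg fun x => abs_nonneg _
  have hu_le : ∀ t, t ∈ Set.Icc (0:ℝ) T → u t ≤ S * t := by
    intro t ht
    calc u t ≤ ∑' x, M x * t :=
          Summable.tsum_le_tsum (fun x => hg_le x t ht) (hg_summable t ht) (hMsummable.mul_right t)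
      _ = S * t := tsum_mul_right
  have hu_lip : ∀ t, t ∈ Set.Icc (0:ℝ) T → ∀ t', t' ∈ Set.Icc (0:ℝ) T →
      |u t - u t'| ≤ S * |t - t'| := by
    intro t ht t' ht'
    have hsub : Summable (fun x => |g x t| - |g x t'|) :=
      (hg_summable t ht).sub (hg_summable t' ht')
    have h1 : u t - u t' = ∑' x, (|g x t| - |g x t'|) :=
      (Summable.tsum_sub (hg_summable t ht) (hg_summable t' ht')).symm
    have h2 : ∀ x, |(|g x t| - |g x t'|)| ≤ M x * |t - t'| := fun x =>
      le_trans (abs_abs_sub_abs_le_abs_sub _ _) (hg_lip x t ht t' ht')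
    have hsumabs : Summable (fun x => |(|g x t| - |g x t'|)|) :=
      Summable.of_nonneg_of_le (fun x => abs_nonneg _) h2 (hMsummable.mul_right _)
    rw [h1]
    calc |∑' x, (|g x t| - |g x t'|)| ≤ ∑' x, |(|g x t| - |g x t'|)| :=
          fv_abs_tsum_le_tsum_abs _ hsumabs
      _ ≤ ∑' x, M x * |t - t'| := Summable.tsum_le_tsum h2 hsumabs (hMsummable.mul_right _)
      _ = S * |t - t'| := tsum_mul_right
  have hu_cont : ContinuousOn u (Set.Icc (0:ℝ) T) := by
    have hlip : LipschitzOnWith (Real.toNNReal S) u (Set.Icc (0:ℝ) T) := by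
      rw [lipschitzOnWith_iff_dist_le_mul]
      intro t ht t' ht'
      rw [Real.dist_eq, Real.dist_eq]
      calc |u t - u t'| ≤ S * |t - t'| := hu_lip t ht t' ht'
        _ = (Real.toNNReal S : ℝ) * |t - t'| := by rw [Real.coe_toNNReal S hS0]
    exact hlip.continuousOn
  have hD_int : ∀ x, ∀ t, t ∈ Set.Icc (0:ℝ) T →
      IntervalIntegrable (D x) MeasureTheory.volume 0 t := by
    intro x t ht
    rw [intervalIntegrable_iff_integrableOn_Icc_of_le ht.1]
    have hmb : Measurable (fun s => deriv (fun r => φ r x) s - deriv (fun r => ψ r x) s) :=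
      (measurable_deriv _).sub (measurable_deriv _)
    have hmeas : MeasureTheory.AEStronglyMeasurable (D x)
        (MeasureTheory.volume.restrict (Set.Icc (0:ℝ) t)) := by
      refine hmb.aestronglyMeasurable.congr ?_
      refine (MeasureTheory.ae_restrict_mem measurableSet_Icc).mono (fun s hs => ?_)
      have h1 := (hφ_deriv s hs.1 x).deriv
      have h2 := (hψ_deriv s hs.1 x).deriv
      simp only [hDdef]
      rw [h1, h2]
    refine MeasureTheory.Integrable.mono'
      (g := fun _ => M x) ((MeasureTheory.integrableOn_const_iff (by simp)).2 (Or.inr ?_)) hmeas ?_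
    · exact measure_Icc_lt_top
    · refine (MeasureTheory.ae_restrict_mem measurableSet_Icc).mono (fun s hs => ?_)
      rw [Real.norm_eq_abs]
      exact hM_le x s ⟨hs.1, hs.2.trans ht.2⟩
  have hg_ftc : ∀ x, ∀ t, t ∈ Set.Icc (0:ℝ) T → g x t = ∫ s in (0:ℝ)..t, D x s := by
    intro x t ht
    have := intervalIntegral.integral_eq_sub_of_hasDerivAt (f := g x) (f' := D x)
      (fun s hs => hg_deriv s (by rw [Set.uIcc_of_le ht.1] at hs; exact hs.1) x)
      (hD_int x t ht)
    rw [this, hg0 x, sub_zero]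
  -- the key pointwise estimate
  have hkey : ∀ s, s ∈ Set.Icc (0:ℝ) T → ∀ F : Finset Λ,
      (∑ x ∈ F, |D x s|) ≤ K * u s := by
    intro s hs F
    have hs0 := hs.1
    have hgabs_s : Summable (fun y => |g y s|) := hg_summable s hs
    -- row sums of |q| are bounded by 2 qbar
    have hrow : ∀ y : Λ, ∀ G : Finset Λ, (∑ x ∈ G, |q (some y) (some x)|) ≤ 2 * qbar := by
      intro y G
      have h1 : (∑ x ∈ G, |q (some y) (some x)|)
          ≤ ∑ x ∈ insert y G, |q (some y) (some x)| :=
        Finset.sum_le_sum_of_subset_of_nonneg (Finset.subset_insert y G)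
          (fun _ _ _ => abs_nonneg _)
      rw [← Finset.add_sum_erase _ _ (Finset.mem_insert_self y G)] at h1
      have hGy : ∀ x ∈ (insert y G).erase y, (some x : Option Λ) ≠ some y := by
        intro x hx
        simpa using Finset.ne_of_mem_erase hx
      have h2 : (∑ x ∈ (insert y G).erase y, |q (some y) (some x)|) ≤ qbar := by
        have heq : ∀ x ∈ (insert y G).erase y,
            |q (some y) (some x)| = q (some y) (some x) := fun x hx =>
          abs_of_nonneg (hq_nonneg _ _ (Ne.symm (hGy x hx)))
        rw [Finset.sum_congr rfl heq]
        have einj : Function.Injective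
            (fun x : {x // x ∈ (insert y G).erase y} =>
              (⟨some x.1, hGy x.1 x.2⟩ : {z : Option Λ // z ≠ some y})) := by
          intro a b hab
          have : (some a.1 : Option Λ) = some b.1 := congrArg Subtype.val hab
          exact Subtype.ext (Option.some_injective _ this)
        calc (∑ x ∈ (insert y G).erase y, q (some y) (some x))
            = ∑ x ∈ ((insert y G).erase y).attach, q (some y) (some x.1) :=
              (Finset.sum_attach _ _).symm
          _ = ∑ z ∈ ((insert y G).erase y).attach.map
                ⟨fun x => (⟨some x.1, hGy x.1 x.2⟩ : {z : Option Λ // z ≠ some y}), einj⟩, q (some y) (z : Option Λ) :=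
              (Finset.sum_map (((insert y G).erase y).attach)
                ⟨fun x => (⟨some x.1, hGy x.1 x.2⟩ : {z : Option Λ // z ≠ some y}), einj⟩
                (fun z : {z : Option Λ // z ≠ some y} => q (some y) (z : Option Λ))).symm
          _ ≤ ∑' z : {z : Option Λ // z ≠ some y}, q (some y) (z : Option Λ) :=
              Summable.sum_le_tsum _ (fun j _ => hq_nonneg _ _ (Ne.symm j.2)) (hq_summable (some y))
          _ ≤ qbar := hqbar (some y)
      have h3 := hq_diag_abs (some y)
      linarith
    -- pointwise domination of |D x s|
    set Hf : Λ → Λ → ℝ := fun x y =>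
      |g y s| * |q (some y) (some x)| + q (some y) none * φ s x * |g y s|
        + q (some y) none * ψ s y * |g x s| with hHf
    have hH_nonneg : ∀ x y, 0 ≤ Hf x y := by
      intro x y
      have := abs_nonneg (g y s)
      have := abs_nonneg (g x s)
      have := abs_nonneg (q (some y) (some x))
      have := hq0_nonneg y
      have := (hφ_mem s hs0 x).1
      have := (hψ_mem s hs0 y).1
      simp only [hHf]
      positivity
    have hH_le : ∀ x y, Hf x y ≤ qbar * |g y s| + qbar * |g y s| + qbar * ψ s y * |g x s| := by
      intro x y
      have b1 : |g y s| * |q (some y) (some x)| ≤ qbar * |g y s| := by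
        rw [mul_comm]
        exact mul_le_mul_of_nonneg_right (hq_abs y x) (abs_nonneg _)
      have b2 : q (some y) none * φ s x * |g y s| ≤ qbar * |g y s| := by
        refine mul_le_mul_of_nonneg_right ?_ (abs_nonneg _)
        calc q (some y) none * φ s x ≤ qbar * 1 :=
              mul_le_mul (hq0_le y) (hφ_mem s hs0 x).2 (hφ_mem s hs0 x).1 hqbar0
          _ = qbar := mul_one _
      have b3 : q (some y) none * ψ s y * |g x s| ≤ qbar * ψ s y * |g x s| :=
        mul_le_mul_of_nonneg_right
          (mul_le_mul_of_nonneg_right (hq0_le y) (hψ_mem s hs0 y).1) (abs_nonneg _)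
      simp only [hHf]
      linarith
    have hH_sum : ∀ x, Summable (Hf x) := by
      intro x
      refine Summable.of_nonneg_of_le (hH_nonneg x) (hH_le x) ?_
      refine Summable.add (Summable.add ?_ ?_) ?_
      · exact hgabs_s.mul_left qbar
      · exact hgabs_s.mul_left qbar
      · exact (((hψ_summable s hs0).mul_left qbar).mul_right (|g x s|))
    have hDle : ∀ x, |D x s| ≤ ∑' y, Hf x y := by
      intro x
      have hsφ := (hgen φ hφ_mem hφ_summable hφ_mass s hs0 x).1
      have hsψ := (hgen ψ hψ_mem hψ_summable hψ_mass s hs0 x).1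
      have hdiff : D x s = ∑' y, (φ s y * (q (some y) (some x) + q (some y) none * φ s x)
          - ψ s y * (q (some y) (some x) + q (some y) none * ψ s x)) := by
        simp only [hDdef]
        exact (Summable.tsum_sub hsφ hsψ).symm
      have hterm : ∀ y, |φ s y * (q (some y) (some x) + q (some y) none * φ s x)
          - ψ s y * (q (some y) (some x) + q (some y) none * ψ s x)| ≤ Hf x y := by
        intro y
        have e1 : φ s y * (q (some y) (some x) + q (some y) none * φ s x)
            - ψ s y * (q (some y) (some x) + q (some y) none * ψ s x)
            = g y s * q (some y) (some x)
              + q (some y) none * (g y s * φ s x + ψ s y * g x s) := by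
          simp only [hgdef]; ring
        rw [e1]
        have i1 : |g y s * q (some y) (some x)| ≤ |g y s| * |q (some y) (some x)| :=
          le_of_eq (abs_mul _ _)
        have i2 : |q (some y) none * (g y s * φ s x + ψ s y * g x s)|
            ≤ q (some y) none * (|g y s| * φ s x + ψ s y * |g x s|) := by
          rw [abs_mul, abs_of_nonneg (hq0_nonneg y)]
          refine mul_le_mul_of_nonneg_left ?_ (hq0_nonneg y)
          calc |g y s * φ s x + ψ s y * g x s|
              ≤ |g y s * φ s x| + |ψ s y * g x s| := abs_add_le _ _
            _ = |g y s| * φ s x + ψ s y * |g x s| := by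
                rw [abs_mul, abs_mul, abs_of_nonneg (hφ_mem s hs0 x).1,
                  abs_of_nonneg (hψ_mem s hs0 y).1]
        calc |g y s * q (some y) (some x)
              + q (some y) none * (g y s * φ s x + ψ s y * g x s)|
            ≤ |g y s * q (some y) (some x)|
              + |q (some y) none * (g y s * φ s x + ψ s y * g x s)| := abs_add_le _ _
          _ ≤ |g y s| * |q (some y) (some x)|
              + q (some y) none * (|g y s| * φ s x + ψ s y * |g x s|) := add_le_add i1 i2
          _ = Hf x y := by simp only [hHf]; ring
      rw [hdiff]
      have habs_sum : Summable (fun y =>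
          |φ s y * (q (some y) (some x) + q (some y) none * φ s x)
            - ψ s y * (q (some y) (some x) + q (some y) none * ψ s x)|) :=
        (hsφ.sub hsψ).abs
      calc |∑' y, (φ s y * (q (some y) (some x) + q (some y) none * φ s x)
            - ψ s y * (q (some y) (some x) + q (some y) none * ψ s x))|
          ≤ ∑' y, |φ s y * (q (some y) (some x) + q (some y) none * φ s x)
            - ψ s y * (q (some y) (some x) + q (some y) none * ψ s x)| :=
            fv_abs_tsum_le_tsum_abs _ habs_sum
        _ ≤ ∑' y, Hf x y := Summable.tsum_le_tsum hterm habs_sum (hH_sum x)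
    have hφF : (∑ x ∈ F, φ s x) ≤ 1 :=
      (Summable.sum_le_tsum F (fun x _ => (hφ_mem s hs0 x).1) (hφ_summable s hs0)).trans
        (hφ_mass s hs0)
    have hgF : (∑ x ∈ F, |g x s|) ≤ u s :=
      Summable.sum_le_tsum F (fun x _ => abs_nonneg _) hgabs_s
    have hper : ∀ y, (∑ x ∈ F, Hf x y) ≤ 3 * qbar * |g y s| + qbar * u s * ψ s y := by
      intro y
      have hsplit : (∑ x ∈ F, Hf x y)
          = |g y s| * (∑ x ∈ F, |q (some y) (some x)|)
            + (q (some y) none * |g y s|) * (∑ x ∈ F, φ s x)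
            + (q (some y) none * ψ s y) * (∑ x ∈ F, |g x s|) := by
        simp only [hHf, Finset.mul_sum, ← Finset.sum_add_distrib]
        exact Finset.sum_congr rfl (fun x _ => by ring)
      rw [hsplit]
      have t1 : |g y s| * (∑ x ∈ F, |q (some y) (some x)|) ≤ |g y s| * (2 * qbar) :=
        mul_le_mul_of_nonneg_left (hrow y F) (abs_nonneg _)
      have hq0g : 0 ≤ q (some y) none * |g y s| := mul_nonneg (hq0_nonneg y) (abs_nonneg _)
      have t2 : (q (some y) none * |g y s|) * (∑ x ∈ F, φ s x) ≤ qbar * |g y s| := by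
        calc (q (some y) none * |g y s|) * (∑ x ∈ F, φ s x)
            ≤ (q (some y) none * |g y s|) * 1 := mul_le_mul_of_nonneg_left hφF hq0g
          _ = q (some y) none * |g y s| := mul_one _
          _ ≤ qbar * |g y s| := mul_le_mul_of_nonneg_right (hq0_le y) (abs_nonneg _)
      have hq0ψ : 0 ≤ q (some y) none * ψ s y :=
        mul_nonneg (hq0_nonneg y) (hψ_mem s hs0 y).1
      have t3 : (q (some y) none * ψ s y) * (∑ x ∈ F, |g x s|) ≤ qbar * u s * ψ s y := by
        calc (q (some y) none * ψ s y) * (∑ x ∈ F, |g x s|)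
            ≤ (q (some y) none * ψ s y) * u s := mul_le_mul_of_nonneg_left hgF hq0ψ
          _ ≤ (qbar * ψ s y) * u s := mul_le_mul_of_nonneg_right
              (mul_le_mul_of_nonneg_right (hq0_le y) (hψ_mem s hs0 y).1) (hu0 s)
          _ = qbar * u s * ψ s y := by ring
      linarith
    have hRHS_sum : Summable (fun y => 3 * qbar * |g y s| + qbar * u s * ψ s y) :=
      (hgabs_s.mul_left _).add ((hψ_summable s hs0).mul_left _)
    calc (∑ x ∈ F, |D x s|) ≤ ∑ x ∈ F, ∑' y, Hf x y :=
          Finset.sum_le_sum (fun x _ => hDle x)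
      _ = ∑' y, ∑ x ∈ F, Hf x y := (Summable.tsum_finsetSum (fun x _ => hH_sum x)).symm
      _ ≤ ∑' y, (3 * qbar * |g y s| + qbar * u s * ψ s y) :=
          Summable.tsum_le_tsum hper (summable_sum (fun x _ => hH_sum x)) hRHS_sum
      _ = 3 * qbar * u s + qbar * u s * ∑' y, ψ s y := by
          rw [Summable.tsum_add (hgabs_s.mul_left _) ((hψ_summable s hs0).mul_left _),
            tsum_mul_left, tsum_mul_left]
      _ ≤ 3 * qbar * u s + qbar * u s * 1 := by
          refine add_le_add_right (mul_le_mul_of_nonneg_left (hψ_mass s hs0) ?_) _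
          exact mul_nonneg hqbar0 (hu0 s)
      _ = K * u s := by rw [hK]; ring
  -- the Grönwall-type integral inequality
  have hgron : ∀ t, t ∈ Set.Icc (0:ℝ) T → u t ≤ K * ∫ s in (0:ℝ)..t, u s := by
    intro t ht
    have hsub : Set.Icc (0:ℝ) t ⊆ Set.Icc (0:ℝ) T := Set.Icc_subset_Icc le_rfl ht.2
    have hKu_int : IntervalIntegrable (fun s => K * u s) MeasureTheory.volume 0 t := by
      refine ContinuousOn.intervalIntegrable ?_
      rw [Set.uIcc_of_le ht.1]
      exact continuousOn_const.mul (hu_cont.mono hsub)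
    refine Summable.tsum_le_of_sum_le (hg_summable t ht) (fun F => ?_)
    have hDint_abs : ∀ x ∈ F, IntervalIntegrable (fun s => |D x s|) MeasureTheory.volume 0 t :=
      fun x _ => (hD_int x t ht).abs
    have hsum_int : IntervalIntegrable (fun s => ∑ x ∈ F, |D x s|) MeasureTheory.volume 0 t := by
      have h := IntervalIntegrable.sum F hDint_abs
      rwa [show (∑ i ∈ F, fun s => |D i s|) = (fun s => ∑ x ∈ F, |D x s|) from
        funext fun s => by simp] at h
    calc (∑ x ∈ F, |g x t|) = ∑ x ∈ F, |∫ s in (0:ℝ)..t, D x s| :=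
          Finset.sum_congr rfl (fun x _ => by rw [hg_ftc x t ht])
      _ ≤ ∑ x ∈ F, ∫ s in (0:ℝ)..t, |D x s| :=
          Finset.sum_le_sum (fun x _ =>
            intervalIntegral.abs_integral_le_integral_abs ht.1)
      _ = ∫ s in (0:ℝ)..t, ∑ x ∈ F, |D x s| :=
          (intervalIntegral.integral_finset_sum (fun x hx => hDint_abs x hx)).symm
      _ ≤ ∫ s in (0:ℝ)..t, K * u s := by
          refine intervalIntegral.integral_mono_on ht.1 hsum_int hKu_int (fun s hs => ?_)
          exact hkey s ⟨hs.1, hs.2.trans ht.2⟩ F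
      _ = K * ∫ s in (0:ℝ)..t, u s := intervalIntegral.integral_const_mul _ _
  -- iterate the inequality
  have hiter : ∀ n : ℕ, ∀ t, t ∈ Set.Icc (0:ℝ) T →
      u t ≤ S * T * (K * t) ^ n / n.factorial := by
    intro n
    induction n with
    | zero =>
      intro t ht
      have h1 : u t ≤ S * t := hu_le t ht
      have h2 : S * t ≤ S * T := mul_le_mul_of_nonneg_left ht.2 hS0
      simpa using h1.trans h2
    | succ n ih =>
      intro t ht
      have hsub : Set.Icc (0:ℝ) t ⊆ Set.Icc (0:ℝ) T := Set.Icc_subset_Icc le_rfl ht.2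
      have hu_int : IntervalIntegrable u MeasureTheory.volume 0 t := by
        refine ContinuousOn.intervalIntegrable ?_
        rw [Set.uIcc_of_le ht.1]
        exact hu_cont.mono hsub
      have hpoly_int : IntervalIntegrable
          (fun s => S * T * (K * s) ^ n / n.factorial) MeasureTheory.volume 0 t := by
        refine ContinuousOn.intervalIntegrable (Continuous.continuousOn ?_)
        exact (continuous_const.mul ((continuous_const.mul continuous_id).pow n)).div_const _
      have h1 := hgron t ht
      have h2 : (∫ s in (0:ℝ)..t, u s)
          ≤ ∫ s in (0:ℝ)..t, S * T * (K * s) ^ n / n.factorial := by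
        refine intervalIntegral.integral_mono_on ht.1 hu_int hpoly_int (fun s hs => ?_)
        exact ih s ⟨hs.1, hs.2.trans ht.2⟩
      have hfne : ((n.factorial : ℝ)) ≠ 0 := Nat.cast_ne_zero.2 n.factorial_ne_zero
      have h3 : (∫ s in (0:ℝ)..t, S * T * (K * s) ^ n / n.factorial)
          = (S * T * K ^ n / n.factorial) * (t ^ (n+1) / (n+1)) := by
        have hcong : ∀ s ∈ Set.uIcc (0:ℝ) t,
            S * T * (K * s) ^ n / n.factorial = (S * T * K ^ n / n.factorial) * s ^ n := by
          intro s _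
          rw [mul_pow]; ring
        rw [intervalIntegral.integral_congr hcong, intervalIntegral.integral_const_mul,
          integral_pow]
        have : (0:ℝ) ^ (n + 1) = 0 := zero_pow (Nat.succ_ne_zero n)
        rw [this, sub_zero]
      have h4 : u t ≤ K * ((S * T * K ^ n / n.factorial) * (t ^ (n+1) / (n+1))) := by
        refine h1.trans ?_
        exact mul_le_mul_of_nonneg_left (h2.trans_eq h3) hK0
      refine h4.trans_eq ?_
      rw [Nat.factorial_succ, mul_pow]
      have hn1 : ((n:ℝ) + 1) ≠ 0 := by positivity
      push_cast
      field_simp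
      ring
  -- conclude
  intro t ht x
  have hu_zero : u t = 0 := by
    have htend : Filter.Tendsto (fun n : ℕ => S * T * (K * t) ^ n / (n.factorial : ℝ))
        Filter.atTop (𝓝 0) := by
      have h := FloorSemiring.tendsto_pow_div_factorial_atTop (K := ℝ) (K * t)
      have h2 := h.const_mul (S * T)
      simpa [mul_div_assoc] using h2
    have hle : u t ≤ 0 :=
      ge_of_tendsto htend (Filter.Eventually.of_forall (fun n => hiter n t ht))
    exact le_antisymm hle (hu0 t)
  have hx : |g x t| ≤ u t := Summable.le_tsum (hg_summable t ht) x (fun j _ => abs_nonneg _)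
  have hgx : g x t = 0 := by
    have h1 : |g x t| ≤ 0 := hu_zero ▸ hx
    exact abs_eq_zero.1 (le_antisymm h1 (abs_nonneg _))
  have h2 : φ t x - ψ t x = 0 := hgx
  linarith
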